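/- Let G be a (P₃ ∪ P₂, diamond)-free graph with ω(G) ≥ 4 and maximum clique A = {1,…,ω}, with C_{ij} sets defined as usual. If there is an edge between C₂₃ and C₁₃, then both C₂₃ and C₁₃ are independent sets. -/

import Mathlib

open SimpleGraph

/-- `H` occurs as an induced subgraph of `G`. -/
def IsInducedCopy {α β : Type*} (H : SimpleGraph α) (G : SimpleGraph β) : Prop :=
  ∃ f : α ↪ β, ∀ a b : α, G.Adj (f a) (f b) ↔ H.Adj a b

/-- `G` is `H`-free: no induced copy of `H`. -/
def Free {α β : Type*} (G : SimpleGraph α) (H : SimpleGraph β) : Prop :=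
  ¬ IsInducedCopy H G

/-- `P₃ ∪ P₂`: disjoint union of a path on 3 vertices and an edge. -/
def P3UP2 : SimpleGraph (Fin 5) :=
  SimpleGraph.fromRel (fun a b => (a, b) ∈ [((0 : Fin 5), (1 : Fin 5)), (1, 2), (3, 4)])

/-- The diamond: `K₄` minus an edge. -/
def diamondG : SimpleGraph (Fin 4) :=
  SimpleGraph.fromRel (fun a b =>
    (a, b) ∈ [((0 : Fin 4), (2 : Fin 4)), (0, 3), (1, 2), (1, 3), (2, 3)])

/-- `2K₂`: two disjoint edges. -/
def twoK2 : SimpleGraph (Fin 4) :=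
  SimpleGraph.fromRel (fun a b => (a, b) ∈ [((0 : Fin 4), (1 : Fin 4)), (2, 3)])

/-- `P₄ ∪ P₂`. -/
def P4UP2 : SimpleGraph (Fin 6) :=
  SimpleGraph.fromRel (fun a b =>
    (a, b) ∈ [((0 : Fin 6), (1 : Fin 6)), (1, 2), (2, 3), (4, 5)])

/-- The cycle on `n` vertices (for `n ≥ 3`), as a graph on `ZMod n`. -/
def cycG (n : ℕ) : SimpleGraph (ZMod n) :=
  SimpleGraph.fromRel (fun a b => b = a + 1)

/-- A graph is perfect if every induced subgraph has chromatic number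
equal to its clique number. -/
def IsPerfect {V : Type*} (G : SimpleGraph V) : Prop :=
  ∀ s : Set V, (G.induce s).chromaticNumber = ((G.induce s).cliqueNum : ℕ∞)

/-- The set `C_{ij}` attached to a maximum clique enumerated by `f : Fin ω ↪ V`:
vertices outside the clique, non-adjacent to both `f i` and `f j`, where `(i,j)`
is the lexicographically least such pair (this closed form is equivalent to the
iterative definition removing earlier `C`-sets). -/
def Cset {V : Type*} (G : SimpleGraph V) {ω : ℕ} (f : Fin ω ↪ V) (i j : Fin ω) : Set V :=
  {v | v ∉ Set.range f ∧ ¬ G.Adj v (f i) ∧ ¬ G.Adj v (f j) ∧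
    ∀ p q : Fin ω, p < q → ¬ G.Adj v (f p) → ¬ G.Adj v (f q) →
      i < p ∨ (i = p ∧ j ≤ q)}

/-- The set `I_a` attached to a maximum clique enumerated by `f : Fin ω ↪ V`:
vertices outside the clique adjacent to every clique vertex except `f k`. -/
def Iset {V : Type*} (G : SimpleGraph V) {ω : ℕ} (f : Fin ω ↪ V) (k : Fin ω) : Set V :=
  {v | v ∉ Set.range f ∧ ¬ G.Adj v (f k) ∧ ∀ l : Fin ω, l ≠ k → G.Adj v (f l)}

lemma noP3UP2 {V : Type*} {G : SimpleGraph V} (h : _root_.Free G P3UP2)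
    (p0 p1 p2 p3 p4 : V)
    (a01 : G.Adj p0 p1) (a12 : G.Adj p1 p2) (a34 : G.Adj p3 p4)
    (n02 : ¬ G.Adj p0 p2) (n03 : ¬ G.Adj p0 p3) (n04 : ¬ G.Adj p0 p4)
    (n13 : ¬ G.Adj p1 p3) (n14 : ¬ G.Adj p1 p4)
    (n23 : ¬ G.Adj p2 p3) (n24 : ¬ G.Adj p2 p4)
    (d02 : p0 ≠ p2) (d03 : p0 ≠ p3) (d04 : p0 ≠ p4)
    (d13 : p1 ≠ p3) (d14 : p1 ≠ p4) (d23 : p2 ≠ p3) (d24 : p2 ≠ p4) : False := by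
  have d01 := a01.ne
  have d12 := a12.ne
  have d34 := a34.ne
  have d10 := d01.symm; have d20 := d02.symm; have d30 := d03.symm
  have d40 := d04.symm; have d21 := d12.symm; have d31 := d13.symm
  have d41 := d14.symm; have d32 := d23.symm; have d42 := d24.symm
  have d43 := d34.symm
  have a10 := a01.symm; have a21 := a12.symm; have a43 := a34.symm
  have n20 : ¬ G.Adj p2 p0 := fun hh => n02 hh.symm
  have n30 : ¬ G.Adj p3 p0 := fun hh => n03 hh.symm
  have n40 : ¬ G.Adj p4 p0 := fun hh => n04 hh.symm
  have n31 : ¬ G.Adj p3 p1 := fun hh => n13 hh.symm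
  have n41 : ¬ G.Adj p4 p1 := fun hh => n14 hh.symm
  have n32 : ¬ G.Adj p3 p2 := fun hh => n23 hh.symm
  have n42 : ¬ G.Adj p4 p2 := fun hh => n24 hh.symm
  apply h
  refine ⟨⟨![p0,p1,p2,p3,p4], ?_⟩, ?_⟩
  · intro i j hij
    fin_cases i <;> fin_cases j <;> simp_all
  · intro i j
    change G.Adj (![p0,p1,p2,p3,p4] i) (![p0,p1,p2,p3,p4] j) ↔ _
    fin_cases i <;> fin_cases j <;>
      simp_all [P3UP2, SimpleGraph.fromRel_adj]

lemma noDiamond {V : Type*} {G : SimpleGraph V} (h : _root_.Free G diamondG)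
    (d0 d1 d2 d3 : V)
    (a02 : G.Adj d0 d2) (a03 : G.Adj d0 d3) (a12 : G.Adj d1 d2)
    (a13 : G.Adj d1 d3) (a23 : G.Adj d2 d3)
    (n01 : ¬ G.Adj d0 d1) (ne01 : d0 ≠ d1) : False := by
  have e02 := a02.ne; have e03 := a03.ne; have e12 := a12.ne
  have e13 := a13.ne; have e23 := a23.ne
  have e10 := ne01.symm; have e20 := e02.symm; have e30 := e03.symm
  have e21 := e12.symm; have e31 := e13.symm; have e32 := e23.symm
  have a20 := a02.symm; have a30 := a03.symm; have a21 := a12.symm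
  have a31 := a13.symm; have a32 := a23.symm
  have n10 : ¬ G.Adj d1 d0 := fun hh => n01 hh.symm
  apply h
  refine ⟨⟨![d0,d1,d2,d3], ?_⟩, ?_⟩
  · intro i j hij
    fin_cases i <;> fin_cases j <;> simp_all
  · intro i j
    change G.Adj (![d0,d1,d2,d3] i) (![d0,d1,d2,d3] j) ↔ _
    fin_cases i <;> fin_cases j <;>
      simp_all [diamondG, SimpleGraph.fromRel_adj]

theorem stmt16 {V : Type*} [Fintype V] (G : SimpleGraph V) {ω : ℕ} (hω : 4 ≤ ω)
    (f : Fin ω ↪ V) (hA : G.IsClique (Set.range f))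
    (hmax : ∀ t : Finset V, G.IsClique (t : Set V) → t.card ≤ ω)
    (h1 : _root_.Free G P3UP2) (h2 : _root_.Free G diamondG)
    (v1 v2 v3 : Fin ω) (h12 : v1 < v2) (h23 : v2 < v3)
    (hv1 : (v1 : ℕ) = 0) (hv2 : (v2 : ℕ) = 1) (hv3 : (v3 : ℕ) = 2)
    (C23 C13 : Set V)
    (hC23 : C23 = {v | v ∉ Set.range f ∧ ¬ G.Adj v (f v2) ∧ ¬ G.Adj v (f v3) ∧
      G.Adj v (f v1)})
    (hC13 : C13 = {v | v ∉ Set.range f ∧ ¬ G.Adj v (f v1) ∧ ¬ G.Adj v (f v3) ∧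
      G.Adj v (f v2)})
    (hedge : ∃ a ∈ C23, ∃ b ∈ C13, G.Adj a b) :
    (∀ x ∈ C23, ∀ y ∈ C23, ¬ G.Adj x y) ∧ (∀ x ∈ C13, ∀ y ∈ C13, ¬ G.Adj x y) := by
  obtain ⟨a, ha, b, hb, hab⟩ := hedge
  subst hC23 hC13
  set k : Fin ω := ⟨3, by omega⟩ with hk
  have hkv : (k : ℕ) = 3 := rfl
  have hadj : ∀ i j : Fin ω, i ≠ j → G.Adj (f i) (f j) := fun i j hij =>
    hA ⟨i, rfl⟩ ⟨j, rfl⟩ (fun hh => hij (f.injective hh))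
  have hne : ∀ i j : Fin ω, (i : ℕ) ≠ (j : ℕ) → i ≠ j := by
    intro i j hij hh; exact hij (congrArg Fin.val hh)
  have h21 : v2 ≠ v1 := hne _ _ (by omega)
  have h31 : v3 ≠ v1 := hne _ _ (by omega)
  have h32 : v3 ≠ v2 := hne _ _ (by omega)
  have hk1 : k ≠ v1 := hne _ _ (by omega)
  have hk2 : k ≠ v2 := hne _ _ (by omega)
  have hk3 : k ≠ v3 := hne _ _ (by omega)
  have hnr : ∀ (v : V), v ∉ Set.range f → ∀ i : Fin ω, v ≠ f i := by
    intro v hv i hh; exact hv ⟨i, hh.symm⟩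
  -- members of C23 are adjacent to no clique vertex except f v1
  have key23 : ∀ v : V, v ∉ Set.range f → ¬ G.Adj v (f v2) → G.Adj v (f v1) →
      ∀ l : Fin ω, l ≠ v1 → ¬ G.Adj v (f l) := by
    intro v hvr hv2a hv1a l hl hvl
    by_cases hl2 : l = v2
    · exact hv2a (hl2 ▸ hvl)
    · exact noDiamond h2 v (f v2) (f v1) (f l) hv1a hvl
        (hadj v2 v1 h21) (hadj v2 l (fun hh => hl2 hh.symm))
        (hadj v1 l (fun hh => hl hh.symm)) hv2a (hnr v hvr v2)
  have key13 : ∀ v : V, v ∉ Set.range f → ¬ G.Adj v (f v1) → G.Adj v (f v2) →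
      ∀ l : Fin ω, l ≠ v2 → ¬ G.Adj v (f l) := by
    intro v hvr hv1a hv2a l hl hvl
    by_cases hl1 : l = v1
    · exact hv1a (hl1 ▸ hvl)
    · exact noDiamond h2 v (f v1) (f v2) (f l) hv2a hvl
        (hadj v1 v2 h21.symm) (hadj v1 l (fun hh => hl1 hh.symm))
        (hadj v2 l (fun hh => hl hh.symm)) hv1a (hnr v hvr v1)
  obtain ⟨har, ha2, ha3, ha1⟩ := ha
  obtain ⟨hbr, hb1, hb3, hb2⟩ := hb
  constructor
  · -- C23 independent, using b ∈ C13
    intro x hx y hy hxy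
    obtain ⟨hxr, hx2, hx3, hx1⟩ := hx
    obtain ⟨hyr, hy2, hy3, hy1⟩ := hy
    have hxb : x ≠ b := fun hh => hb1 (hh ▸ hx1)
    have hyb : y ≠ b := fun hh => hb1 (hh ▸ hy1)
    have hbk : ¬ G.Adj b (f k) := key13 b hbr hb1 hb2 k hk2
    have hxk : ¬ G.Adj x (f k) := key23 x hxr hx2 hx1 k hk1
    have hyk : ¬ G.Adj y (f k) := key23 y hyr hy2 hy1 k hk1
    by_cases hxab : G.Adj x b
    · by_cases hyab : G.Adj y b
      · -- diamond b, f v1, x, y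
        exact noDiamond h2 b (f v1) x y hxab.symm hyab.symm hx1.symm hy1.symm
          hxy hb1 (hnr b hbr v1)
      · -- P3: y - x - b, edge f v3 - f k
        exact noP3UP2 h1 y x b (f v3) (f k) hxy.symm hxab (hadj v3 k (fun hh => hk3 hh.symm))
          hyab hy3 hyk hx3 hxk hb3 hbk hyb (hnr y hyr v3) (hnr y hyr k)
          (hnr x hxr v3) (hnr x hxr k) (hnr b hbr v3) (hnr b hbr k)
    · by_cases hyab : G.Adj y b
      · exact noP3UP2 h1 x y b (f v3) (f k) hxy hyab (hadj v3 k (fun hh => hk3 hh.symm))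
          hxab hx3 hxk hy3 hyk hb3 hbk hxb (hnr x hxr v3) (hnr x hxr k)
          (hnr y hyr v3) (hnr y hyr k) (hnr b hbr v3) (hnr b hbr k)
      · -- P3: b - f v2 - f v3, edge x - y
        exact noP3UP2 h1 b (f v2) (f v3) x y hb2 (hadj v2 v3 h32.symm) hxy
          hb3 (fun hh => hxab hh.symm) (fun hh => hyab hh.symm)
          (fun hh => hx2 hh.symm) (fun hh => hy2 hh.symm)
          (fun hh => hx3 hh.symm) (fun hh => hy3 hh.symm)
          (hnr b hbr v3) hxb.symm hyb.symm
          (fun hh => hxr ⟨v2, hh⟩) (fun hh => hyr ⟨v2, hh⟩)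
          (fun hh => hxr ⟨v3, hh⟩) (fun hh => hyr ⟨v3, hh⟩)
  · -- C13 independent, using a ∈ C23
    intro x hx y hy hxy
    obtain ⟨hxr, hx1, hx3, hx2⟩ := hx
    obtain ⟨hyr, hy1, hy3, hy2⟩ := hy
    have hxa : x ≠ a := fun hh => ha2 (hh ▸ hx2)
    have hya : y ≠ a := fun hh => ha2 (hh ▸ hy2)
    have hak : ¬ G.Adj a (f k) := key23 a har ha2 ha1 k hk1
    have hxk : ¬ G.Adj x (f k) := key13 x hxr hx1 hx2 k hk2
    have hyk : ¬ G.Adj y (f k) := key13 y hyr hy1 hy2 k hk2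
    by_cases hxaa : G.Adj x a
    · by_cases hyaa : G.Adj y a
      · exact noDiamond h2 a (f v2) x y hxaa.symm hyaa.symm hx2.symm hy2.symm
          hxy ha2 (hnr a har v2)
      · exact noP3UP2 h1 y x a (f v3) (f k) hxy.symm hxaa (hadj v3 k (fun hh => hk3 hh.symm))
          hyaa hy3 hyk hx3 hxk ha3 hak hya (hnr y hyr v3) (hnr y hyr k)
          (hnr x hxr v3) (hnr x hxr k) (hnr a har v3) (hnr a har k)
    · by_cases hyaa : G.Adj y a
      · exact noP3UP2 h1 x y a (f v3) (f k) hxy hyaa (hadj v3 k (fun hh => hk3 hh.symm))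
          hxaa hx3 hxk hy3 hyk ha3 hak hxa (hnr x hxr v3) (hnr x hxr k)
          (hnr y hyr v3) (hnr y hyr k) (hnr a har v3) (hnr a har k)
      · -- P3: a - f v1 - f v3, edge x - y
        exact noP3UP2 h1 a (f v1) (f v3) x y ha1 (hadj v1 v3 h31.symm) hxy
          ha3 (fun hh => hxaa hh.symm) (fun hh => hyaa hh.symm)
          (fun hh => hx1 hh.symm) (fun hh => hy1 hh.symm)
          (fun hh => hx3 hh.symm) (fun hh => hy3 hh.symm)
          (hnr a har v3) hxa.symm hya.symm
          (fun hh => hxr ⟨v1, hh⟩) (fun hh => hyr ⟨v1, hh⟩)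
          (fun hh => hxr ⟨v3, hh⟩) (fun hh => hyr ⟨v3, hh⟩)
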